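/- arXiv:2401.11340 — 2 statements merged into one kernel-verified Lean document; each statement's English description precedes it below -/
import Mathlib

section
/- The Sharma–Mittal-type composition law Φ(x,y) = e^{L[(x+1)ln(x+1) + (y+1)ln(y+1)]} − 1 is symmetric, associative, and satisfies Φ(x,0) = x, for x, y ≥ 0, where L is the principal branch of the Lambert W function. -/
open Real

/-- The composition law Φ(x,y) = exp(L[(x+1)ln(x+1) + (y+1)ln(y+1)]) − 1
    is symmetric, associative, and satisfies Φ(x,0) = x for x, y ≥ 0, where
    L is the principal branch of the Lambert W function. -/
theorem factorial_class_group_law (L : ℝ → ℝ)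
    (hL : ∀ t : ℝ, -Real.exp (-1) ≤ t → L t * Real.exp (L t) = t ∧ -1 ≤ L t)
    (hLid : ∀ u : ℝ, 1 ≤ u → L (u * Real.log u) = Real.log u) :
    (∀ x y : ℝ, 0 ≤ x → 0 ≤ y →
      Real.exp (L ((x + 1) * Real.log (x + 1) + (y + 1) * Real.log (y + 1))) - 1
        = Real.exp (L ((y + 1) * Real.log (y + 1) + (x + 1) * Real.log (x + 1))) - 1) ∧
    (∀ x y z : ℝ, 0 ≤ x → 0 ≤ y → 0 ≤ z →
      (let Φ : ℝ → ℝ → ℝ := fun a b =>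
        Real.exp (L ((a + 1) * Real.log (a + 1) + (b + 1) * Real.log (b + 1))) - 1
       Φ x (Φ y z) = Φ (Φ x y) z)) ∧
    (∀ x : ℝ, 0 ≤ x →
      Real.exp (L ((x + 1) * Real.log (x + 1) + (0 + 1) * Real.log (0 + 1))) - 1 = x) := by
  set f : ℝ → ℝ := fun a => (a + 1) * Real.log (a + 1) with hf
  have hf0 : ∀ a : ℝ, 0 ≤ a → 0 ≤ f a := by
    intro a ha
    have h1 : (1:ℝ) ≤ a + 1 := by linarith
    exact mul_nonneg (by linarith) (Real.log_nonneg h1)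
  have key : ∀ s : ℝ, 0 ≤ s →
      f (Real.exp (L s) - 1) = s := by
    intro s hs
    have hs' : -Real.exp (-1) ≤ s := le_trans (neg_nonpos.mpr (Real.exp_pos _).le) hs
    have h := (hL s hs').1
    simp only [hf]
    rw [sub_add_cancel, Real.log_exp, mul_comm]
    exact h
  refine ⟨?_, ?_, ?_⟩
  · intro x y hx hy; rw [add_comm ((x+1) * Real.log (x+1))]
  · intro x y z hx hy hz
    simp only []
    have h1 : f (Real.exp (L (f y + f z)) - 1) = f y + f z :=
      key _ (add_nonneg (hf0 y hy) (hf0 z hz))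
    have h2 : f (Real.exp (L (f x + f y)) - 1) = f x + f y :=
      key _ (add_nonneg (hf0 x hx) (hf0 y hy))
    show Real.exp (L (f x + f (Real.exp (L (f y + f z)) - 1))) - 1
        = Real.exp (L (f (Real.exp (L (f x + f y)) - 1) + f z)) - 1
    rw [h1, h2, add_assoc]
  · intro x hx
    have h1 : (1:ℝ) ≤ x + 1 := by linarith
    simp only [Real.log_one, add_zero, mul_zero, mul_one, zero_add]
    rw [hLid (x+1) h1, Real.exp_log (by linarith)]
    ring
end

section
/- For the full-range logistic map f(x) = 4x(1−x) on [0,1], the ordinal 3-pattern (2,1,0) is forbidden: there is no x ∈ [0,1] with f(f(x)) < f(x) < x. -/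
open Set

/-- The ordinal 3-pattern (2,1,0) is forbidden for the full-range logistic map
    f(x) = 4x(1−x): no x ∈ [0,1] satisfies f(f(x)) < f(x) < x. -/
theorem logistic_forbidden_pattern_210 :
    ∀ x ∈ Icc (0:ℝ) 1,
      ¬ (4 * (4 * x * (1 - x)) * (1 - 4 * x * (1 - x)) < 4 * x * (1 - x)
          ∧ 4 * x * (1 - x) < x) := by
  rintro x ⟨hx0, hx1⟩ ⟨h1, h2⟩
  -- from h2: x > 3/4
  have hx34 : 3/4 < x := by nlinarith
  set y := 4 * x * (1 - x) with hy
  have hy0 : 0 ≤ y := by nlinarith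
  have hy34 : y < 3/4 := by nlinarith
  nlinarith [mul_nonneg hy0 (by linarith : (0:ℝ) ≤ 3 - 4*y)]
end
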